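/- Let n ≥ 3 and let R = ℂ[x₁,…,x_n, y₁,…,y_n] / ⟨∑_{i=1}^n x_i y_i − 1⟩. Then the images x̄_n of x_n and ȳ₁ of y₁ in R are prime elements of R. -/

import Mathlib

section PolyAux
open Polynomial


theorem scaleRoots_comp_C_mul_X {A : Type*} [CommRing A] (p : A[X]) (a : A) :
    (p.scaleRoots a).comp (C a * X) = C (a ^ p.natDegree) * p := by
  set d := p.natDegree with hd
  conv_lhs => rw [Polynomial.scaleRoots]
  rw [Polynomial.comp, Polynomial.eval₂_finset_sum]
  conv_rhs => rw [p.as_sum_support]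
  rw [Finset.mul_sum]
  refine Finset.sum_congr rfl fun i hi => ?_
  have hid : d - i + i = d :=
    Nat.sub_add_cancel (Polynomial.le_natDegree_of_ne_zero (Polynomial.mem_support_iff.mp hi))
  have key : p.coeff i * a ^ (d - i) * a ^ i = a ^ d * p.coeff i := by
    rw [mul_assoc, ← pow_add, hid]; ring
  rw [eval₂_monomial, mul_pow, ← mul_assoc, ← C_pow, ← C_mul, key, C_mul, mul_assoc,
    C_mul_X_pow_eq_monomial]

theorem descend_aux {A : Type*} [CommRing A] [IsDomain A] {a c : A}
    (ha : Prime a) (hc : ¬ a ∣ c) :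
    ∀ k (p q : A[X]), C a ^ k * p = (C a * X + C c) * q → (C a * X + C c) ∣ p := by
  have ha0 : a ≠ 0 := ha.ne_zero
  intro k
  induction k with
  | zero => intro p q h; exact ⟨q, by simpa using h⟩
  | succ k ih =>
    intro p q h
    haveI hprime : (Ideal.span {a}).IsPrime := (Ideal.span_singleton_prime ha0).mpr ha
    set mk : A →+* A ⧸ Ideal.span {a} := Ideal.Quotient.mk (Ideal.span {a}) with hmk
    have hma : mk a = 0 := by
      rw [hmk, Ideal.Quotient.eq_zero_iff_mem]
      exact Ideal.mem_span_singleton_self a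
    have hmap : Polynomial.map mk ((C a * X + C c) * q) = 0 := by
      rw [← h, Polynomial.map_mul, Polynomial.map_pow, map_C, hma]
      simp
    rw [Polynomial.map_mul, Polynomial.map_add, Polynomial.map_mul, map_C, map_C, hma] at hmap
    simp only [map_C, Polynomial.C_0, zero_mul, zero_add] at hmap
    have hmkc : mk c ≠ 0 := by
      rw [hmk, Ne, Ideal.Quotient.eq_zero_iff_mem, Ideal.mem_span_singleton]
      exact hc
    have hq0 : Polynomial.map mk q = 0 := by
      rcases mul_eq_zero.mp hmap with h' | h'
      · exact absurd (by simpa using congrArg (fun r => Polynomial.coeff r 0) h') hmkc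
      · exact h'
    have hdvd : C a ∣ q := by
      rw [Polynomial.C_dvd_iff_dvd_coeff]
      intro i
      have h2 := congrArg (fun r => Polynomial.coeff r i) hq0
      simp only [Polynomial.coeff_map, Polynomial.coeff_zero] at h2
      rw [← Ideal.mem_span_singleton]
      rwa [hmk, Ideal.Quotient.eq_zero_iff_mem] at h2
    obtain ⟨q₁, rfl⟩ := hdvd
    have hCa : (C a : A[X]) ≠ 0 := by
      simpa using ha0
    refine ih p q₁ (mul_left_cancel₀ hCa ?_)
    calc C a * (C a ^ k * p) = C a ^ (k + 1) * p := by ring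
    _ = (C a * X + C c) * (C a * q₁) := h
    _ = C a * ((C a * X + C c) * q₁) := by ring

theorem prime_C_mul_X_add_C {A : Type*} [CommRing A] [IsDomain A] {a c : A}
    (ha : Prime a) (hc : ¬ a ∣ c) :
    Prime (C a * X + C c : A[X]) := by
  have ha0 : a ≠ 0 := ha.ne_zero
  set L : A[X] := C a * X + C c with hL
  have hcoeff1 : L.coeff 1 = a := by
    simp [hL, Polynomial.coeff_C]
  have hL0 : L ≠ 0 := fun h => ha0 (by rw [← hcoeff1, h, Polynomial.coeff_zero])
  refine ⟨hL0, fun hu => ?_, fun u v huv => ?_⟩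
  · have h1 : L.natDegree = 0 := natDegree_eq_zero_of_isUnit hu
    have h2 : L.coeff 1 = 0 := Polynomial.coeff_eq_zero_of_natDegree_lt (by omega)
    exact ha0 (hcoeff1.symm.trans h2)
  · -- localization away from a
    set Aa := Localization.Away a with hAa
    have hle : Submonoid.powers a ≤ nonZeroDivisors A :=
      powers_le_nonZeroDivisors_of_noZeroDivisors ha0
    haveI : IsDomain Aa := IsLocalization.isDomain_localization hle
    set α : A →+* Aa := algebraMap A Aa with hα
    have hinj : Function.Injective α := IsLocalization.injective Aa hle
    set r : Aa := α (-c) * IsLocalization.Away.invSelf a with hr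
    have har : α a * r = α (-c) := by
      rw [hr, ← mul_assoc, mul_comm (α a), mul_assoc]
      rw [show α a * IsLocalization.Away.invSelf a = 1 from IsLocalization.Away.mul_invSelf a]
      rw [mul_one]
    have hroot : Polynomial.eval₂ α r L = 0 := by
      rw [hL]
      simp only [Polynomial.eval₂_add, Polynomial.eval₂_mul, Polynomial.eval₂_C,
        Polynomial.eval₂_X]
      rw [har, map_neg]
      ring
    have claim : ∀ w : A[X], Polynomial.eval₂ α r w = 0 → L ∣ w := by
      intro w hw
      have h2 : Polynomial.eval₂ α (α a * r) (w.scaleRoots a) = 0 :=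
        Polynomial.scaleRoots_eval₂_eq_zero α hw
      rw [har] at h2
      have h3 : Polynomial.eval (-c) (w.scaleRoots a) = 0 := by
        apply hinj
        rw [map_zero, ← h2, Polynomial.eval₂_at_apply]
      obtain ⟨q₀, hq₀⟩ := Polynomial.dvd_iff_isRoot.mpr h3
      have h5 := congrArg (fun p : A[X] => p.comp (C a * X)) hq₀
      simp only [scaleRoots_comp_C_mul_X, Polynomial.mul_comp, Polynomial.sub_comp,
        Polynomial.add_comp, Polynomial.X_comp, Polynomial.C_comp, map_neg, sub_neg_eq_add] at h5
      rw [← hL] at h5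
      refine descend_aux ha hc w.natDegree w (q₀.comp (C a * X)) ?_
      rw [Polynomial.C_pow] at h5
      rw [← hL]
      exact h5
    obtain ⟨t, ht⟩ := huv
    have h0 : Polynomial.eval₂ α r u * Polynomial.eval₂ α r v = 0 := by
      rw [← Polynomial.eval₂_mul, ht, Polynomial.eval₂_mul, hroot, zero_mul]
    rcases mul_eq_zero.mp h0 with h' | h'
    · exact Or.inl (claim u h')
    · exact Or.inr (claim v h')

end PolyAux


open MvPolynomial

/-- The defining ideal of `ℂ[x₁,…,xₙ,y₁,…,yₙ]/⟨∑ xᵢ yᵢ − 1⟩`, where the `x` variables are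
indexed by `Sum.inl` and the `y` variables by `Sum.inr`. -/
noncomputable def relIdeal (n : ℕ) : Ideal (MvPolynomial (Fin n ⊕ Fin n) ℂ) :=
  Ideal.span {(∑ i : Fin n, X (Sum.inl i) * X (Sum.inr i)) - 1}

section MvAux

variable {σ : Type*} [DecidableEq σ]

/-- The algebra map setting the variable `v` to `0` and keeping the others. -/
noncomputable def projAway (v : σ) :
    MvPolynomial σ ℂ →ₐ[ℂ] MvPolynomial {s : σ // s ≠ v} ℂ :=
  aeval (fun s => if h : s = v then 0 else X ⟨s, h⟩)

theorem projAway_rename (v : σ) (p : MvPolynomial {s : σ // s ≠ v} ℂ) :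
    projAway v (rename Subtype.val p) = p := by
  have h : (projAway v).comp (rename (Subtype.val : {s : σ // s ≠ v} → σ)) =
      AlgHom.id ℂ _ := by
    apply algHom_ext
    intro s
    simp [projAway, s.2]
  exact DFunLike.congr_fun h p

theorem projAway_X_self (v : σ) : projAway v (X v) = 0 := by
  simp [projAway]

theorem dvd_sub_rename_projAway (v : σ) (p : MvPolynomial σ ℂ) :
    X v ∣ p - rename Subtype.val (projAway v p) := by
  induction p using MvPolynomial.induction_on with
  | C a => simp [projAway]
  | add p q hp hq =>
    rw [map_add, map_add]
    have h := dvd_add hp hq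
    convert h using 1
    ring
  | mul_X p s hp =>
    by_cases hs : s = v
    · subst hs
      rw [map_mul, projAway_X_self, mul_zero, map_zero, sub_zero]
      exact Dvd.intro_left p rfl
    · have hX : projAway v (X s) = X ⟨s, hs⟩ := by simp [projAway, hs]
      rw [map_mul, hX, map_mul, rename_X]
      have h : p * X s - rename Subtype.val (projAway v p) * X s =
          (p - rename Subtype.val (projAway v p)) * X s := by ring
      rw [h]
      exact hp.mul_right _

theorem ker_projAway_quot (v : σ) (c₀ : MvPolynomial {s : σ // s ≠ v} ℂ) :
    RingHom.ker ((Ideal.Quotient.mk (Ideal.span {c₀})).comp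
      (projAway v : MvPolynomial σ ℂ →+* MvPolynomial {s : σ // s ≠ v} ℂ)) =
    Ideal.span {rename Subtype.val c₀, X v} := by
  apply le_antisymm
  · intro p hp
    rw [RingHom.mem_ker, RingHom.comp_apply, Ideal.Quotient.eq_zero_iff_mem,
      Ideal.mem_span_singleton] at hp
    obtain ⟨h, hh⟩ := hp
    obtain ⟨t, ht⟩ := dvd_sub_rename_projAway v p
    rw [Ideal.mem_span_pair]
    refine ⟨rename Subtype.val h, t, ?_⟩
    have : (projAway v) p = c₀ * h := hh
    calc rename Subtype.val h * rename Subtype.val c₀ + t * X v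
        = rename Subtype.val (c₀ * h) + X v * t := by rw [map_mul]; ring
      _ = rename Subtype.val (projAway v p) + (p - rename Subtype.val (projAway v p)) := by
          rw [← this, ← ht]
      _ = p := by ring
  · rw [Ideal.span_le]
    rintro x (rfl | rfl)
    · rw [SetLike.mem_coe, RingHom.mem_ker, RingHom.comp_apply]
      show (Ideal.Quotient.mk _) (projAway v (rename Subtype.val c₀)) = 0
      rw [projAway_rename, Ideal.Quotient.eq_zero_iff_mem]
      exact Ideal.mem_span_singleton_self c₀
    · rw [SetLike.mem_coe, RingHom.mem_ker, RingHom.comp_apply]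
      show (Ideal.Quotient.mk _) (projAway v (X v)) = 0
      rw [projAway_X_self, map_zero]

theorem span_pair_isPrime (v : σ) (c₀ : MvPolynomial {s : σ // s ≠ v} ℂ) (hc₀ : Prime c₀) :
    (Ideal.span {rename Subtype.val c₀, X v} : Ideal (MvPolynomial σ ℂ)).IsPrime := by
  rw [← ker_projAway_quot]
  haveI : (Ideal.span {c₀}).IsPrime := (Ideal.span_singleton_prime hc₀.ne_zero).mpr hc₀
  exact RingHom.ker_isPrime _

theorem prime_X_mv (v : σ) : Prime (X v : MvPolynomial σ ℂ) := by
  have h : (Ideal.span {(X v : MvPolynomial σ ℂ)}).IsPrime := by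
    have he : (Ideal.span {(X v : MvPolynomial σ ℂ)}) =
        Ideal.span {rename Subtype.val (0 : MvPolynomial {s : σ // s ≠ v} ℂ), X v} := by
      rw [map_zero]
      rw [show ({0, X v} : Set (MvPolynomial σ ℂ)) = insert 0 {X v} from rfl]
      rw [Ideal.span_insert, Ideal.span_singleton_eq_bot.mpr rfl, bot_sup_eq]
    rw [he, ← ker_projAway_quot]
    haveI : (Ideal.span {(0 : MvPolynomial {s : σ // s ≠ v} ℂ)}).IsPrime := by
      rw [Ideal.span_singleton_eq_bot.mpr rfl]
      exact Ideal.bot_prime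
    exact RingHom.ker_isPrime _
  exact (Ideal.span_singleton_prime (MvPolynomial.X_ne_zero v)).mp h

theorem prime_quadric {u w : σ} (huw : u ≠ w)
    (d : MvPolynomial {s : σ // s ≠ w} ℂ) (hd : constantCoeff d ≠ 0) :
    Prime (X u * X w + rename Subtype.val d : MvPolynomial σ ℂ) := by
  classical
  set e : σ ≃ Option {s : σ // s ≠ w} := (Equiv.optionSubtypeNe w).symm with he
  set Φ : MvPolynomial σ ℂ ≃ₐ[ℂ] Polynomial (MvPolynomial {s : σ // s ≠ w} ℂ) :=
    (renameEquiv ℂ e).trans (optionEquivLeft ℂ _) with hΦ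
  have hw' : Φ (X w) = Polynomial.X := by
    simp [hΦ, he, Equiv.optionSubtypeNe_symm_self, optionEquivLeft_X_none]
  have hu' : Φ (X u) = Polynomial.C (X ⟨u, huw⟩) := by
    simp [hΦ, he, Equiv.optionSubtypeNe_symm_of_ne huw, optionEquivLeft_X_some]
  have hd' : Φ (rename Subtype.val d) = Polynomial.C d := by
    have hcomp : Φ.toAlgHom.comp (rename (Subtype.val : {s : σ // s ≠ w} → σ)) =
        (Polynomial.CAlgHom : MvPolynomial {s : σ // s ≠ w} ℂ →ₐ[ℂ]
          Polynomial (MvPolynomial {s : σ // s ≠ w} ℂ)) := by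
      apply algHom_ext
      intro s
      simp [hΦ, he, Equiv.optionSubtypeNe_symm_of_ne s.2, optionEquivLeft_X_some,
        Polynomial.CAlgHom]
    exact DFunLike.congr_fun hcomp d
  have key : Prime (Φ (X u * X w + rename Subtype.val d)) := by
    rw [map_add, map_mul, hw', hu', hd']
    refine prime_C_mul_X_add_C (prime_X_mv _) fun hdvd => hd ?_
    obtain ⟨t, ht⟩ := hdvd
    rw [ht, map_mul, constantCoeff_X, zero_mul]
  exact (MulEquiv.prime_iff Φ).mp key

end MvAux

/-- General assembly lemma: if the defining polynomial decomposes as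
`X v * X p + rename val c₀` with `c₀` prime, and `X v` doesn't vanish identically on the
variety, then the image of `X v` is prime. -/
theorem assemble (n : ℕ) (v p : Fin n ⊕ Fin n)
    (c₀ : MvPolynomial {s : Fin n ⊕ Fin n // s ≠ v} ℂ)
    (hf : (∑ i : Fin n, X (Sum.inl i) * X (Sum.inr i)) - 1 =
      X v * X p + rename Subtype.val c₀)
    (hc₀ : Prime c₀)
    (P : Fin n ⊕ Fin n → ℂ)
    (hP : eval P ((∑ i : Fin n, X (Sum.inl i) * X (Sum.inr i)) - 1) = 0)
    (hPv : eval P (X v) = 1) :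
    Prime (Ideal.Quotient.mk (relIdeal n) (X v)) := by
  classical
  set f : MvPolynomial (Fin n ⊕ Fin n) ℂ :=
    (∑ i : Fin n, X (Sum.inl i) * X (Sum.inr i)) - 1 with hfdef
  set K : Ideal (MvPolynomial (Fin n ⊕ Fin n) ℂ) :=
    Ideal.span {rename Subtype.val c₀, X v} with hKdef
  haveI hK : K.IsPrime := span_pair_isPrime v c₀ hc₀
  have hfK : f ∈ K := by
    rw [hKdef, Ideal.mem_span_pair]
    exact ⟨1, X p, by rw [hf]; ring⟩
  have hIle : relIdeal n ≤ K := by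
    rw [relIdeal, Ideal.span_le, Set.singleton_subset_iff]
    exact hfK
  have hdvd : Ideal.Quotient.mk (relIdeal n) (X v) ∣
      Ideal.Quotient.mk (relIdeal n) (rename Subtype.val c₀) := by
    refine ⟨-(Ideal.Quotient.mk (relIdeal n) (X p)), ?_⟩
    have hf0 : Ideal.Quotient.mk (relIdeal n) f = 0 := by
      rw [Ideal.Quotient.eq_zero_iff_mem, relIdeal]
      exact Ideal.subset_span rfl
    have := congrArg (Ideal.Quotient.mk (relIdeal n)) hf
    rw [hf0, map_add, map_mul] at this
    linear_combination -this
  have hmapspan : Ideal.span {Ideal.Quotient.mk (relIdeal n) (X v)} =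
      Ideal.map (Ideal.Quotient.mk (relIdeal n)) K := by
    apply le_antisymm
    · rw [Ideal.span_le, Set.singleton_subset_iff]
      exact Ideal.mem_map_of_mem _ (Ideal.subset_span (by simp))
    · rw [Ideal.map_le_iff_le_comap, hKdef, Ideal.span_le]
      rintro x (rfl | rfl)
      · rw [SetLike.mem_coe, Ideal.mem_comap, Ideal.mem_span_singleton]
        exact hdvd
      · rw [SetLike.mem_coe, Ideal.mem_comap, Ideal.mem_span_singleton]
  have hPrimeIdeal : (Ideal.span {Ideal.Quotient.mk (relIdeal n) (X v)}).IsPrime := by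
    rw [hmapspan]
    exact Ideal.map_isPrime_of_surjective Ideal.Quotient.mk_surjective
      (by rw [Ideal.mk_ker]; exact hIle)
  have hne : Ideal.Quotient.mk (relIdeal n) (X v) ≠ 0 := by
    intro h0
    rw [Ideal.Quotient.eq_zero_iff_mem, relIdeal, Ideal.mem_span_singleton] at h0
    obtain ⟨t, ht⟩ := h0
    have h1 := congrArg (eval P) ht
    rw [map_mul, hP, zero_mul, hPv] at h1
    exact one_ne_zero h1
  exact (Ideal.span_singleton_prime hne).mp hPrimeIdeal

/-- For `n ≥ 3`, the images of `xₙ` and of `y₁` in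
`R = ℂ[x₁,…,xₙ,y₁,…,yₙ]/⟨∑ xᵢ yᵢ − 1⟩` are prime elements of `R`. -/
theorem stmt2 (n : ℕ) (hn : 3 ≤ n) :
    Prime (Ideal.Quotient.mk (relIdeal n) (X (Sum.inl ⟨n - 1, by omega⟩))) ∧
    Prime (Ideal.Quotient.mk (relIdeal n) (X (Sum.inr ⟨0, by omega⟩))) := by
  classical
  obtain ⟨k, rfl⟩ : ∃ k, n = k + 2 := ⟨n - 2, by omega⟩
  constructor
  · -- x-case : kill x_{n-1} = inl (last)
    set v₁ : Fin (k+2) ⊕ Fin (k+2) := Sum.inl (Fin.last (k+1)) with hv₁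
    set c₁ : MvPolynomial {s : Fin (k+2) ⊕ Fin (k+2) // s ≠ v₁} ℂ :=
      (∑ i : Fin (k+1),
        X (⟨Sum.inl i.castSucc, fun h => (Fin.castSucc_lt_last i).ne (Sum.inl.inj h)⟩ :
            {s : Fin (k+2) ⊕ Fin (k+2) // s ≠ v₁}) *
        X (⟨Sum.inr i.castSucc, fun h => Sum.inr_ne_inl h⟩ :
            {s : Fin (k+2) ⊕ Fin (k+2) // s ≠ v₁})) - 1 with hc₁
    have hf : (∑ i : Fin (k+2), X (Sum.inl i) * X (Sum.inr i)) - 1 =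
        X v₁ * X (Sum.inr (Fin.last (k+1))) + rename Subtype.val c₁ := by
      rw [hc₁, map_sub, map_sum, map_one]
      simp only [map_mul, rename_X]
      rw [Fin.sum_univ_castSucc]
      ring
    have hc₁prime : Prime c₁ := by
      set u : {s : Fin (k+2) ⊕ Fin (k+2) // s ≠ v₁} :=
        ⟨Sum.inl ((0 : Fin (k+1)).castSucc),
          fun h => (Fin.castSucc_lt_last _).ne (Sum.inl.inj h)⟩ with hu
      set w : {s : Fin (k+2) ⊕ Fin (k+2) // s ≠ v₁} :=
        ⟨Sum.inr ((0 : Fin (k+1)).castSucc), fun h => Sum.inr_ne_inl h⟩ with hw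
      have huw : u ≠ w := fun h => Sum.inl_ne_inr (congrArg Subtype.val h)
      set d₁ : MvPolynomial {t : {s : Fin (k+2) ⊕ Fin (k+2) // s ≠ v₁} // t ≠ w} ℂ :=
        (∑ i : Fin k,
          X (⟨⟨Sum.inl (i.succ.castSucc),
              fun h => (Fin.castSucc_lt_last _).ne (Sum.inl.inj h)⟩,
              fun h => Sum.inl_ne_inr (congrArg Subtype.val h)⟩ :
              {t : {s : Fin (k+2) ⊕ Fin (k+2) // s ≠ v₁} // t ≠ w}) *
          X (⟨⟨Sum.inr (i.succ.castSucc), fun h => Sum.inr_ne_inl h⟩,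
              fun h => Fin.succ_ne_zero i
                (Fin.castSucc_injective _ (Sum.inr.inj (congrArg Subtype.val h)))⟩ :
              {t : {s : Fin (k+2) ⊕ Fin (k+2) // s ≠ v₁} // t ≠ w})) - 1 with hd₁
      have hsplit : c₁ = X u * X w + rename Subtype.val d₁ := by
        rw [hc₁, hd₁, map_sub, map_sum, map_one]
        simp only [map_mul, rename_X]
        rw [Fin.sum_univ_succ]
        ring
      rw [hsplit]
      refine prime_quadric huw d₁ ?_
      rw [hd₁]
      simp [constantCoeff_X]
    refine assemble (k+2) v₁ (Sum.inr (Fin.last (k+1))) c₁ hf hc₁prime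
      (Sum.elim (fun _ => 1) (fun i => if i = 0 then 1 else 0)) ?_ ?_
    · simp [Finset.sum_ite_eq']
    · simp [hv₁]
  · -- y-case : kill y_0 = inr 0
    set v₂ : Fin (k+2) ⊕ Fin (k+2) := Sum.inr 0 with hv₂
    set c₂ : MvPolynomial {s : Fin (k+2) ⊕ Fin (k+2) // s ≠ v₂} ℂ :=
      (∑ i : Fin (k+1),
        X (⟨Sum.inl i.succ, fun h => Sum.inl_ne_inr h⟩ :
            {s : Fin (k+2) ⊕ Fin (k+2) // s ≠ v₂}) *
        X (⟨Sum.inr i.succ, fun h => Fin.succ_ne_zero i (Sum.inr.inj h)⟩ :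
            {s : Fin (k+2) ⊕ Fin (k+2) // s ≠ v₂})) - 1 with hc₂
    have hf : (∑ i : Fin (k+2), X (Sum.inl i) * X (Sum.inr i)) - 1 =
        X v₂ * X (Sum.inl (0 : Fin (k+2))) + rename Subtype.val c₂ := by
      rw [hc₂, map_sub, map_sum, map_one]
      simp only [map_mul, rename_X]
      rw [Fin.sum_univ_succ]
      ring
    have hc₂prime : Prime c₂ := by
      set u : {s : Fin (k+2) ⊕ Fin (k+2) // s ≠ v₂} :=
        ⟨Sum.inl ((0 : Fin (k+1)).succ), fun h => Sum.inl_ne_inr h⟩ with hu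
      set w : {s : Fin (k+2) ⊕ Fin (k+2) // s ≠ v₂} :=
        ⟨Sum.inr ((0 : Fin (k+1)).succ), fun h => Fin.succ_ne_zero _ (Sum.inr.inj h)⟩ with hw
      have huw : u ≠ w := fun h => Sum.inl_ne_inr (congrArg Subtype.val h)
      set d₂ : MvPolynomial {t : {s : Fin (k+2) ⊕ Fin (k+2) // s ≠ v₂} // t ≠ w} ℂ :=
        (∑ i : Fin k,
          X (⟨⟨Sum.inl (i.succ.succ), fun h => Sum.inl_ne_inr h⟩,
              fun h => Sum.inl_ne_inr (congrArg Subtype.val h)⟩ :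
              {t : {s : Fin (k+2) ⊕ Fin (k+2) // s ≠ v₂} // t ≠ w}) *
          X (⟨⟨Sum.inr (i.succ.succ), fun h => Fin.succ_ne_zero _ (Sum.inr.inj h)⟩,
              fun h => Fin.succ_ne_zero i
                (Fin.succ_injective _ (Sum.inr.inj (congrArg Subtype.val h)))⟩ :
              {t : {s : Fin (k+2) ⊕ Fin (k+2) // s ≠ v₂} // t ≠ w})) - 1 with hd₂
      have hsplit : c₂ = X u * X w + rename Subtype.val d₂ := by
        rw [hc₂, hd₂, map_sub, map_sum, map_one]
        simp only [map_mul, rename_X]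
        rw [Fin.sum_univ_succ]
        ring
      rw [hsplit]
      refine prime_quadric huw d₂ ?_
      rw [hd₂]
      simp [constantCoeff_X]
    have hres : Prime (Ideal.Quotient.mk (relIdeal (k+2)) (X v₂)) := by
      refine assemble (k+2) v₂ (Sum.inl (0 : Fin (k+2))) c₂ hf hc₂prime
        (Sum.elim (fun i => if i = 0 then 1 else 0) (fun _ => 1)) ?_ ?_
      · simp [Finset.sum_ite_eq]
      · simp [hv₂]
    exact hres
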